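/- Let k ≥ 2 be an integer and λ > 0 a real constant. Then there is no holomorphic function f : Δ → Δ such that (1 − |z|^{2k}) · (1 − |f(z)|²)^{λ} = 1 − |z|² for all z ∈ Δ. -/

import Mathlib

open Complex Metric Set Filter Topology

private lemma rpow_base_inj {x y l : ℝ} (hx : 0 ≤ x) (hy : 0 ≤ y) (hl : 0 < l)
    (h : x ^ l = y ^ l) : x = y := by
  rcases lt_trichotomy x y with hlt | he | hlt
  · exact absurd h (ne_of_lt (Real.rpow_lt_rpow hx hlt hl))
  · exact he
  · exact absurd h.symm (ne_of_lt (Real.rpow_lt_rpow hy hlt hl))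

private lemma radial_eq {g : ℂ → ℂ}
    (hg : DifferentiableOn ℂ g (ball 0 1))
    (hrad : ∀ z ∈ ball (0:ℂ) 1, ∀ w ∈ ball (0:ℂ) 1,
      ‖z‖ = ‖w‖ → ‖g z‖ = ‖g w‖)
    (hne : ∀ z ∈ ball (0:ℂ) 1, g z ≠ 0) :
    ∀ z ∈ ball (0:ℂ) 1, ∀ w ∈ ball (0:ℂ) 1, ‖g z‖ = ‖g w‖ := by
  intro z hz w hw
  rw [mem_ball_zero_iff] at hz hw
  set r : ℝ := (max ‖z‖ ‖w‖ + 1) / 2 with hr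
  have hmax1 : max ‖z‖ ‖w‖ < 1 := max_lt hz hw
  have hmax0 : 0 ≤ max ‖z‖ ‖w‖ := le_max_of_le_left (norm_nonneg _)
  have hr1 : r < 1 := by rw [hr]; linarith
  have hzr : ‖z‖ < r := by have := le_max_left ‖z‖ ‖w‖; rw [hr]; linarith
  have hwr : ‖w‖ < r := by have := le_max_right ‖z‖ ‖w‖; rw [hr]; linarith
  have hzB : z ∈ ball (0:ℂ) r := mem_ball_zero_iff.2 hzr
  have hwB : w ∈ ball (0:ℂ) r := mem_ball_zero_iff.2 hwr
  have hKsub : closedBall (0:ℂ) r ⊆ ball 0 1 := closedBall_subset_ball hr1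
  have hBsub : ball (0:ℂ) r ⊆ ball 0 1 := ball_subset_ball hr1.le
  have hK : IsCompact (closedBall (0:ℂ) r) := isCompact_closedBall _ _
  have hKne : (closedBall (0:ℂ) r).Nonempty := ⟨z, ball_subset_closedBall hzB⟩
  have hcont : ContinuousOn (fun x => ‖g x‖) (closedBall (0:ℂ) r) :=
    ((hg.continuousOn).mono hKsub).norm
  obtain ⟨z0, hz0K, hmax⟩ := hK.exists_isMaxOn hKne hcont
  obtain ⟨w0, hw0K, hmin⟩ := hK.exists_isMinOn hKne hcont
  have done_of_const : ∀ c : ℂ, EqOn g (Function.const ℂ c) (ball (0:ℂ) r) →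
      ‖g z‖ = ‖g w‖ := by
    intro c hc
    rw [hc hzB, hc hwB]; rfl
  by_cases h1 : ‖z0‖ < r
  · -- interior maximum
    have hm : IsMaxOn (norm ∘ g) (ball (0:ℂ) r) z0 := hmax.on_subset ball_subset_closedBall
    exact done_of_const _ (Complex.eqOn_of_isPreconnected_of_isMaxOn_norm
      (convex_ball (0:ℂ) r).isPreconnected isOpen_ball (hg.mono hBsub)
      (mem_ball_zero_iff.2 h1) hm)
  · have hz0r : ‖z0‖ = r := le_antisymm (mem_closedBall_zero_iff.1 hz0K) (not_lt.1 h1)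
    by_cases h2 : ‖w0‖ < r
    · -- interior minimum: apply max principle to g⁻¹
      have hginv : DifferentiableOn ℂ (fun x => (g x)⁻¹) (ball (0:ℂ) r) :=
        (hg.mono hBsub).inv fun x hx => hne x (hBsub hx)
      have hw0pos : 0 < ‖g w0‖ := norm_pos_iff.2 (hne w0 (hKsub hw0K))
      have hm : IsMaxOn (norm ∘ fun x => (g x)⁻¹) (ball (0:ℂ) r) w0 := by
        intro x hx
        simp only [Function.comp_apply, norm_inv]
        exact inv_anti₀ hw0pos (hmin (ball_subset_closedBall hx))
      have hc := Complex.eqOn_of_isPreconnected_of_isMaxOn_norm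
        (convex_ball (0:ℂ) r).isPreconnected isOpen_ball hginv
        (mem_ball_zero_iff.2 h2) hm
      refine done_of_const (g w0) fun x hx => ?_
      have := hc hx
      simp only [Function.const] at this ⊢
      rw [← inv_inv (g x), this, inv_inv]
    · -- both extrema on the boundary circle
      have hw0r : ‖w0‖ = r := le_antisymm (mem_closedBall_zero_iff.1 hw0K) (not_lt.1 h2)
      have hzw0 : ‖g z0‖ = ‖g w0‖ := by
        refine hrad z0 (hKsub hz0K) w0 (hKsub hw0K) ?_
        simp only [hz0r, hw0r]
      have h3 : ‖g z‖ ≤ ‖g w‖ := by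
        calc ‖g z‖ ≤ ‖g z0‖ := hmax (ball_subset_closedBall hzB)
        _ = ‖g w0‖ := hzw0
        _ ≤ ‖g w‖ := hmin (ball_subset_closedBall hwB)
      have h4 : ‖g w‖ ≤ ‖g z‖ := by
        calc ‖g w‖ ≤ ‖g z0‖ := hmax (ball_subset_closedBall hwB)
        _ = ‖g w0‖ := hzw0
        _ ≤ ‖g z‖ := hmin (ball_subset_closedBall hzB)
      exact le_antisymm h3 h4

set_option maxHeartbeats 1000000 in
/-- Non-existence: for `k ≥ 2` and `λ > 0` there is no holomorphic map `f : Δ → Δ` with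
`(1 - |z|^{2k}) (1 - |f(z)|²)^λ = 1 - |z|²` on `Δ`. -/
theorem no_power_factor_isometry (k : ℕ) (hk : 2 ≤ k) (lam : ℝ) (hlam : 0 < lam) :
    ¬ ∃ f : ℂ → ℂ,
      DifferentiableOn ℂ f (Metric.ball 0 1) ∧
      (∀ z ∈ Metric.ball (0 : ℂ) 1, ‖f z‖ < 1) ∧
      ∀ z ∈ Metric.ball (0 : ℂ) 1,
        (1 - ‖z‖ ^ (2 * k)) * (1 - ‖f z‖ ^ 2) ^ lam
          = 1 - ‖z‖ ^ 2 := by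
  rintro ⟨f, hdiff, hlt, heq⟩
  obtain ⟨m, rfl⟩ : ∃ m, k = m + 2 := ⟨k - 2, by omega⟩
  have hmem : ∀ z : ℂ, z ∈ ball (0:ℂ) 1 ↔ ‖z‖ < 1 := by
    intro z; rw [mem_ball_zero_iff]
  have h0mem : (0:ℂ) ∈ ball (0:ℂ) 1 := mem_ball_self one_pos
  -- basic positivity facts
  have hfz1 : ∀ z ∈ ball (0:ℂ) 1, 0 ≤ 1 - ‖f z‖ ^ 2 := by
    intro z hz
    have h1 := hlt z hz
    have h0 := norm_nonneg (f z)
    nlinarith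
  have hden : ∀ z ∈ ball (0:ℂ) 1, 0 < 1 - ‖z‖ ^ (2 * (m + 2)) := by
    intro z hz
    have : ‖z‖ ^ (2 * (m + 2)) < 1 :=
      pow_lt_one₀ (norm_nonneg z) ((hmem z).1 hz) (by omega)
    linarith
  -- f 0 = 0
  have hf0 : f 0 = 0 := by
    have h0 := heq 0 h0mem
    simp only [norm_zero, zero_pow (by omega : 2 * (m + 2) ≠ 0), sub_zero,
      zero_pow (by norm_num : (2:ℕ) ≠ 0), one_mul] at h0
    have he1 : (1 - ‖f 0‖ ^ 2) ^ lam = (1:ℝ) ^ lam := by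
      rw [h0, Real.one_rpow]
    have := rpow_base_inj (hfz1 0 h0mem) zero_le_one hlam he1
    have habs : ‖f 0‖ = 0 := by nlinarith [norm_nonneg (f 0)]
    exact norm_eq_zero.1 habs
  -- the dslope function g
  set g : ℂ → ℂ := dslope f 0 with hgdef
  have hg : DifferentiableOn ℂ g (ball 0 1) :=
    (Complex.differentiableOn_dslope (isOpen_ball.mem_nhds h0mem)).2 hdiff
  have hgz : ∀ z : ℂ, z ≠ 0 → g z = f z / z := by
    intro z hz
    rw [hgdef, dslope_of_ne f hz, slope_def_field, hf0, sub_zero, sub_zero]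
  -- key rpow relation
  have hkey : ∀ z ∈ ball (0:ℂ) 1, (1 - ‖f z‖ ^ 2) ^ lam
      = (1 - ‖z‖ ^ 2) / (1 - ‖z‖ ^ (2 * (m + 2))) := by
    intro z hz
    rw [eq_div_iff (hden z hz).ne', mul_comm]
    exact heq z hz
  -- f does not vanish away from 0
  have hfne : ∀ z ∈ ball (0:ℂ) 1, z ≠ 0 → f z ≠ 0 := by
    intro z hz hz0 hf
    have h := heq z hz
    rw [hf] at h
    simp only [norm_zero, zero_pow (by norm_num : (2:ℕ) ≠ 0), sub_zero, Real.one_rpow,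
      mul_one] at h
    have ht0 : 0 < ‖z‖ := norm_pos_iff.2 hz0
    have ht1 : ‖z‖ < 1 := (hmem z).1 hz
    have : ‖z‖ ^ (2 * (m + 2)) < ‖z‖ ^ 2 :=
      pow_lt_pow_right_of_lt_one₀ ht0 ht1 (by omega)
    nlinarith
  -- radial property of |f|
  have hradf : ∀ z ∈ ball (0:ℂ) 1, ∀ w ∈ ball (0:ℂ) 1,
      ‖z‖ = ‖w‖ → ‖f z‖ = ‖f w‖ := by
    intro z hz w hw hzw
    have h1 := hkey z hz
    have h2 := hkey w hw
    rw [hzw] at h1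
    have := rpow_base_inj (hfz1 z hz) (hfz1 w hw) hlam (h1.trans h2.symm)
    have h3 : ‖f z‖ ^ 2 = ‖f w‖ ^ 2 := by linarith
    exact (pow_left_inj₀ (norm_nonneg _) (norm_nonneg _)
      (by norm_num : (2:ℕ) ≠ 0)).1 h3
  -- radial property of |g|
  have hradg : ∀ z ∈ ball (0:ℂ) 1, ∀ w ∈ ball (0:ℂ) 1,
      ‖z‖ = ‖w‖ → ‖g z‖ = ‖g w‖ := by
    intro z hz w hw hzw
    rcases eq_or_ne z 0 with rfl | hz0
    · have : w = 0 := by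
        have : ‖w‖ = 0 := by rw [← hzw, norm_zero]
        exact norm_eq_zero.1 this
      rw [this]
    · have hw0 : w ≠ 0 := by
        intro h; apply hz0
        apply norm_eq_zero.1
        rw [hzw, h, norm_zero]
      rw [hgz z hz0, hgz w hw0, norm_div, norm_div, hradf z hz w hw hzw, hzw]
  -- lower bound: (1-t)/(1-t^(m+2)) ≤ (1-c0 t)^lam for small t
  set c0 : ℝ := min 1 (1/lam) / 2 with hc0def
  have hc0pos : (0:ℝ) < c0 := by
    rw [hc0def]; positivity
  have hc0half : c0 ≤ 1/2 := by
    rw [hc0def]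
    have : min 1 (1/lam) ≤ 1 := min_le_left _ _
    linarith
  have hB : ∀ t : ℝ, 0 < t → t ≤ 1/2 → (1-t)/(1-t^(m+2)) ≤ (1-c0*t)^lam := by
    intro t ht0 ht2
    have ht1 : t < 1 := by linarith
    have hb0 : 0 < 1 - c0*t := by nlinarith
    have hB1 : (1:ℝ) - t/2 ≤ (1 - c0*t)^lam := by
      rcases le_or_gt 1 lam with hl1 | hl1
      · have hc0eq : c0 = (1/lam)/2 := by
          rw [hc0def, min_eq_right ((div_le_one hlam).2 hl1)]
        have hber := one_add_mul_self_le_rpow_one_add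
          (show (-1:ℝ) ≤ -(c0*t) by nlinarith) hl1
        have h' : 1 + lam * -(c0*t) = 1 - t/2 := by
          rw [hc0eq]; field_simp; ring
        rw [h'] at hber
        rw [sub_eq_add_neg 1 (c0*t)]
        exact hber
      · have hc0eq : c0 = 1/2 := by
          rw [hc0def, min_eq_left (one_le_one_div hlam hl1.le)]
        have hx1 : 1 - c0*t ≤ 1 := by nlinarith
        have := Real.rpow_le_rpow_of_exponent_ge hb0 hx1 hl1.le
        rw [Real.rpow_one] at this
        calc (1:ℝ) - t/2 = 1 - c0*t := by rw [hc0eq]; ring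
        _ ≤ (1-c0*t)^lam := this
    have hdpos : 0 < 1 - t^(m+2) := by
      have : t^(m+2) < 1 := pow_lt_one₀ ht0.le ht1 (by omega)
      linarith
    have hB2 : (1 - t)/(1 - t^(m+2)) ≤ 1 - t/2 := by
      rw [div_le_iff₀ hdpos]
      have h1 : t^(m+1) ≤ t := pow_le_of_le_one ht0.le ht1.le (by omega)
      have h2 : t^(m+2) ≤ (1/2)*t := by
        have he : t^(m+2) = t^(m+1)*t := by ring
        nlinarith
      nlinarith [pow_nonneg ht0.le (m+2)]
    linarith
  -- lower bound for |f| near 0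
  have hlow : ∀ s : ℝ, 0 < s → s ≤ 1/2 → c0 * s^2 ≤ ‖f (s:ℂ)‖^2 := by
    intro s hs hs2
    have habs_s : ‖(s:ℂ)‖ = s := by rw [Complex.norm_real, Real.norm_eq_abs, abs_of_pos hs]
    have hsb : (s:ℂ) ∈ ball (0:ℂ) 1 := (hmem _).2 (by rw [habs_s]; linarith)
    have ht0 : 0 < s^2 := by positivity
    have ht2 : s^2 ≤ 1/2 := by nlinarith
    by_contra hcon
    push_neg at hcon
    have hkey' := hkey _ hsb
    rw [habs_s] at hkey'
    have hpowt : s ^ (2*(m+2)) = (s^2) ^ (m+2) := by rw [← pow_mul]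
    rw [hpowt] at hkey'
    have hlt1 : (1 - c0*s^2)^lam < (1 - ‖f (s:ℂ)‖^2)^lam :=
      Real.rpow_lt_rpow (by nlinarith) (by linarith) hlam
    rw [hkey'] at hlt1
    have := hB (s^2) ht0 ht2
    linarith
  -- g does not vanish
  have hgne : ∀ z ∈ ball (0:ℂ) 1, g z ≠ 0 := by
    intro z hz
    rcases eq_or_ne z 0 with rfl | hz0
    · intro hg0
      have hcw : ContinuousWithinAt g (ball (0:ℂ) 1) 0 := hg.continuousOn 0 h0mem
      have T1 : Tendsto (fun s : ℝ => (s:ℂ)) (𝓝[>] (0:ℝ)) (𝓝[ball (0:ℂ) 1] 0) := by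
        apply tendsto_nhdsWithin_of_tendsto_nhds_of_eventually_within
        · have h := Complex.continuous_ofReal.tendsto 0
          simpa using h.mono_left nhdsWithin_le_nhds
        · filter_upwards [Ioo_mem_nhdsGT_of_mem
            (show (0:ℝ) ∈ Ico (0:ℝ) 1 by constructor <;> norm_num)] with s hs
          exact (hmem _).2 (by rw [Complex.norm_real, Real.norm_eq_abs, abs_of_pos hs.1]; exact hs.2)
      have T2 : Tendsto (fun s : ℝ => ‖g (s:ℂ)‖ ^ 2) (𝓝[>] (0:ℝ))
          (𝓝 (‖g 0‖ ^ 2)) :=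
        ((continuous_norm.pow 2).tendsto (g 0)).comp
          ((hcw.tendsto).comp T1)
      have hev : ∀ᶠ s : ℝ in 𝓝[>] (0:ℝ), c0 ≤ ‖g (s:ℂ)‖ ^ 2 := by
        filter_upwards [Ioo_mem_nhdsGT_of_mem
          (show (0:ℝ) ∈ Ico (0:ℝ) (1/2) by constructor <;> norm_num)] with s hs
        have hsc : (s:ℂ) ≠ 0 := Complex.ofReal_ne_zero.2 (ne_of_gt hs.1)
        rw [hgz _ hsc, norm_div, Complex.norm_real, Real.norm_eq_abs, abs_of_pos hs.1, div_pow,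
          le_div_iff₀ (pow_pos hs.1 2)]
        exact hlow s hs.1 hs.2.le
      have hfin := ge_of_tendsto T2 hev
      rw [hg0, norm_zero] at hfin
      norm_num at hfin
      linarith
    · rw [hgz z hz0]
      exact div_ne_zero (hfne z hz hz0) hz0
  -- g is constant
  have hall := radial_eq hg hradg hgne
  have hmax0 : IsMaxOn (norm ∘ g) (ball (0:ℂ) 1) 0 := by
    intro x hx
    simp only [Function.comp_apply]
    exact le_of_eq (hall x hx 0 h0mem)
  have hconst := Complex.eqOn_of_isPreconnected_of_isMaxOn_norm
    (convex_ball (0:ℂ) 1).isPreconnected isOpen_ball hg h0mem hmax0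
  set a : ℂ := g 0 with hadef
  have hfa : ∀ z ∈ ball (0:ℂ) 1, f z = a * z := by
    intro z hz
    rcases eq_or_ne z 0 with rfl | hz0
    · rw [hf0, mul_zero]
    · have h1 : g z = a := hconst hz
      rw [hgz z hz0, div_eq_iff hz0] at h1
      rw [h1, mul_comm]
  set μ : ℝ := ‖a‖ ^ 2 with hμdef
  have haneq : a ≠ 0 := hgne 0 h0mem
  have hapos : 0 < ‖a‖ := norm_pos_iff.2 haneq
  have hμpos : 0 < μ := by rw [hμdef]; positivity
  have hμ1 : μ ≤ 1 := by
    by_contra hcon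
    push_neg at hcon
    have hA1 : 1 < ‖a‖ := by nlinarith
    have hs0 : 0 < (‖a‖)⁻¹ := by positivity
    have hs1 : (‖a‖)⁻¹ < 1 := inv_lt_one_of_one_lt₀ hA1
    have hsb : (((‖a‖)⁻¹ : ℝ):ℂ) ∈ ball (0:ℂ) 1 :=
      (hmem _).2 (by rw [Complex.norm_real, Real.norm_eq_abs, abs_of_pos hs0]; exact hs1)
    have h := hlt _ hsb
    rw [hfa _ hsb, norm_mul, Complex.norm_real, Real.norm_eq_abs, abs_of_pos hs0,
      mul_inv_cancel₀ (ne_of_gt hapos)] at h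
    exact lt_irrefl 1 h
  -- the real functional identity
  have hE : ∀ t : ℝ, 0 ≤ t → t < 1 → (1 - t^(m+2)) * (1 - μ*t)^lam = 1 - t := by
    intro t ht0 ht1
    have hs0 : 0 ≤ Real.sqrt t := Real.sqrt_nonneg t
    have hst : Real.sqrt t ^ 2 = t := Real.sq_sqrt ht0
    have hs1 : Real.sqrt t < 1 := by nlinarith
    have hsb : ((Real.sqrt t : ℝ):ℂ) ∈ ball (0:ℂ) 1 :=
      (hmem _).2 (by rw [Complex.norm_real, Real.norm_eq_abs, _root_.abs_of_nonneg hs0]; exact hs1)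
    have h := heq _ hsb
    rw [hfa _ hsb, norm_mul, Complex.norm_real, Real.norm_eq_abs, _root_.abs_of_nonneg hs0] at h
    have e1 : Real.sqrt t ^ (2*(m+2)) = t^(m+2) := by rw [pow_mul, hst]
    have e2 : (‖a‖ * Real.sqrt t)^2 = μ * t := by
      rw [mul_pow, hst, hμdef]
    rw [e1, e2, hst] at h
    exact h
  clear_value g a μ
  -- differentiate the identity
  have hstar : ∀ t ∈ Ioo (0:ℝ) 1,
      (↑(m+2):ℝ) * t^(m+1) * (1-μ*t) * (1-t) + lam*μ*(1-t)*(1-t^(m+2))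
        = (1-μ*t) * (1-t^(m+2)) := by
    rintro t ⟨ht0, ht1⟩
    have hb : 0 < 1 - μ*t := by nlinarith
    have h1 : HasDerivAt (fun x : ℝ => 1 - x^(m+2)) (-((↑(m+2):ℝ) * t^(m+1))) t := by
      simpa using (hasDerivAt_pow (m+2) t).const_sub 1
    have h2 : HasDerivAt (fun x : ℝ => 1 - μ*x) (-μ) t := by
      simpa using ((hasDerivAt_id t).const_mul μ).const_sub 1
    have h3 : HasDerivAt (fun x : ℝ => (1 - μ*x)^lam) (-μ * lam * (1-μ*t)^(lam-1)) t :=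
      h2.rpow_const (Or.inl hb.ne')
    have hmul := h1.mul h3
    have hEeq : (fun x : ℝ => 1 - x) =ᶠ[nhds t] fun x => (1 - x^(m+2)) * (1-μ*x)^lam := by
      filter_upwards [isOpen_Ioo.mem_nhds (show t ∈ Ioo (0:ℝ) 1 from ⟨ht0, ht1⟩)] with x hx
      exact (hE x hx.1.le hx.2).symm
    have hmul' := hmul.congr_of_eventuallyEq hEeq
    have hD := hmul'.unique (show HasDerivAt (fun x : ℝ => 1 - x) (-1) t by
      simpa using (hasDerivAt_id t).const_sub 1)
    set P : ℝ := (1-μ*t)^(lam-1) with hPdef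
    set A : ℝ := (1-μ*t)^lam with hAdef
    have hPb : P * (1-μ*t) = A := by
      rw [hPdef, hAdef, ← Real.rpow_add_one hb.ne' (lam-1), sub_add_cancel]
    have hA : (1 - t^(m+2)) * A = 1 - t := hE t ht0.le ht1
    have e1 : μ*lam*P*(1-t^(m+2)) = 1 - (↑(m+2):ℝ)*t^(m+1)*A := by
      linear_combination -hD
    have e3 : μ*lam*A*(1-t^(m+2)) = (1-μ*t) - (↑(m+2):ℝ)*t^(m+1)*A*(1-μ*t) := by
      linear_combination (1-μ*t)*e1 - μ*lam*(1-t^(m+2))*hPb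
    linear_combination (1-t^(m+2))*e3 - (μ*lam*(1-t^(m+2)) + (↑(m+2):ℝ)*t^(m+1)*(1-μ*t))*hA
  -- limits at 0
  haveI hNB : (nhdsWithin (0:ℝ) (Ioo (0:ℝ) 1)).NeBot := by
    apply mem_closure_iff_nhdsWithin_neBot.1
    rw [closure_Ioo (by norm_num : (0:ℝ) ≠ 1)]
    exact ⟨le_refl 0, by norm_num⟩
  have limit_zero : ∀ Q : ℝ → ℝ, Continuous Q → (∀ t ∈ Ioo (0:ℝ) 1, Q t = 0) → Q 0 = 0 := by
    intro Q hQc hQz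
    have T1 : Tendsto Q (nhdsWithin (0:ℝ) (Ioo (0:ℝ) 1)) (nhds (Q 0)) :=
      (hQc.tendsto 0).mono_left nhdsWithin_le_nhds
    have T2 : Tendsto Q (nhdsWithin (0:ℝ) (Ioo (0:ℝ) 1)) (nhds 0) := by
      apply Tendsto.congr' _ tendsto_const_nhds
      filter_upwards [self_mem_nhdsWithin] with x hx
      exact (hQz x hx).symm
    exact tendsto_nhds_unique T1 T2
  have hμlam : lam * μ = 1 := by
    have h := limit_zero
      (fun t => (↑(m+2):ℝ)*t^(m+1)*(1-μ*t)*(1-t) + lam*μ*(1-t)*(1-t^(m+2))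
        - (1-μ*t)*(1-t^(m+2)))
      (by fun_prop)
      (fun t ht => by linarith [hstar t ht])
    have hz1 : (0:ℝ)^(m+1) = 0 := zero_pow (by omega)
    have hz2 : (0:ℝ)^(m+2) = 0 := zero_pow (by omega)
    simp only [hz1, hz2] at h
    norm_num at h
    linarith
  have hR0 : (↑(m+2):ℝ)*(0:ℝ)^m*(1-μ*0)*(1-0) + (1-(0:ℝ)^(m+2))*(μ-1) = 0 := by
    apply limit_zero (fun t => (↑(m+2):ℝ)*t^m*(1-μ*t)*(1-t) + (1-t^(m+2))*(μ-1))
      (by fun_prop)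
    intro t ht
    have hs := hstar t ht
    have key : t * ((↑(m+2):ℝ)*t^m*(1-μ*t)*(1-t) + (1-t^(m+2))*(μ-1)) = 0 := by
      linear_combination hs - (1-t)*(1-t^(m+2))*hμlam
    rcases mul_eq_zero.1 key with h | h
    · exact absurd h (ne_of_gt ht.1)
    · exact h
  -- conclude
  by_cases hm : m = 0
  · rw [hm] at hR0
    norm_num at hR0
    linarith
  · have h0m : (0:ℝ)^m = 0 := zero_pow hm
    rw [h0m] at hR0
    have hz2 : (0:ℝ)^(m+2) = 0 := zero_pow (by omega)
    rw [hz2] at hR0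
    have hμeq : μ = 1 := by norm_num at hR0; linarith
    have hlam1 : lam = 1 := by rw [hμeq, mul_one] at hμlam; exact hμlam
    have hEh := hE (1/2) (by norm_num) (by norm_num)
    rw [hμeq, hlam1, Real.rpow_one] at hEh
    have hp : (0:ℝ) < (1/2:ℝ)^(m+2) := by positivity
    nlinarith
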